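/- Fix b > a. Let f_n: [a, b] → ℝ be a sequence of random convex functions converging pointwise in probability to a function f: [a, b] → ℝ. Then inf_{x ∈ [a,b]} f_n(x) converges in probability to inf_{x ∈ [a,b]} f(x). Similarly, if f_n: (a, b] → ℝ is a sequence of random convex functions converging pointwise in probability to f: (a, b] → ℝ, then inf_{x ∈ (a,b]} f_n(x) converges in probability to inf_{x ∈ (a,b]} f(x). -/

import Mathlib

open MeasureTheory ProbabilityTheory Filter

noncomputable section

namespace InfConvAux

variable {I : Set ℝ} {f g : ℝ → ℝ}

/-- Non-adjacent slope monotonicity for convex functions. -/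
lemma slope4 (hf : ConvexOn ℝ I f) {p q r s : ℝ} (hp : p ∈ I) (hq : q ∈ I) (hr : r ∈ I)
    (hs : s ∈ I) (h1 : p < q) (h2 : q ≤ r) (h3 : r < s) :
    (f q - f p) / (q - p) ≤ (f s - f r) / (s - r) := by
  rcases eq_or_lt_of_le h2 with h | h
  · subst h
    exact hf.slope_mono_adjacent hp hs h1 h3
  · exact (hf.slope_mono_adjacent hp hr h1 h).trans (hf.slope_mono_adjacent hq hs h h3)

/-- Lower bound to the left of `q` using the secant over `[q, r]`. -/
lemma lemA' (hf : ConvexOn ℝ I f) {x q r : ℝ} (hx : x ∈ I) (hq : q ∈ I) (hr : r ∈ I)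
    (hxq : x ≤ q) (hqr : q < r) :
    f q - (q - x) * max 0 ((f r - f q) / (r - q)) ≤ f x := by
  rcases eq_or_lt_of_le hxq with h | h
  · subst h; simp
  · have hs := hf.slope_mono_adjacent hx hr h hqr
    have h1 : f q - f x ≤ (q - x) * ((f r - f q) / (r - q)) := by
      rw [div_le_iff₀ (by linarith)] at hs
      linarith [hs]
    have h2 : (q - x) * ((f r - f q) / (r - q)) ≤ (q - x) * max 0 ((f r - f q) / (r - q)) :=
      mul_le_mul_of_nonneg_left (le_max_right _ _) (by linarith)
    linarith

/-- Lower bound to the right of `q` using the secant over `[p, q]`. -/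
lemma lemB' (hf : ConvexOn ℝ I f) {p q x : ℝ} (hp : p ∈ I) (hq : q ∈ I) (hx : x ∈ I)
    (hpq : p < q) (hqx : q ≤ x) :
    f q - (x - q) * max 0 ((f p - f q) / (q - p)) ≤ f x := by
  rcases eq_or_lt_of_le hqx with h | h
  · subst h; simp
  · have hs := hf.slope_mono_adjacent hp hx hpq h
    have h1 : (x - q) * ((f q - f p) / (q - p)) ≤ f x - f q := by
      rw [le_div_iff₀ (by linarith)] at hs
      nlinarith [hs]
    have h2 : (x - q) * (-((f p - f q) / (q - p))) ≤ (x - q) * ((f q - f p) / (q - p)) := by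
      have : -((f p - f q) / (q - p)) = (f q - f p) / (q - p) := by ring
      rw [this]
    have h3 : (x - q) * (-(max 0 ((f p - f q) / (q - p)))) ≤
        (x - q) * (-((f p - f q) / (q - p))) :=
      mul_le_mul_of_nonneg_left (neg_le_neg (le_max_right _ _)) (by linarith)
    nlinarith [h1, h2, h3]

/-- Spacing version: if `q - x ≤ r - q`, the dip below `f q` is at most `max 0 (f r - f q)`. -/
lemma lemA (hf : ConvexOn ℝ I f) {x q r : ℝ} (hx : x ∈ I) (hq : q ∈ I) (hr : r ∈ I)
    (hxq : x ≤ q) (hqr : q < r) (hsp : q - x ≤ r - q) :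
    f q - max 0 (f r - f q) ≤ f x := by
  have h0 := lemA' hf hx hq hr hxq hqr
  have hpos : (0:ℝ) < r - q := by linarith
  have h1 : (q - x) * max 0 ((f r - f q) / (r - q)) ≤ (r - q) * max 0 ((f r - f q) / (r - q)) :=
    mul_le_mul_of_nonneg_right hsp (le_max_left _ _)
  have h2 : (r - q) * max 0 ((f r - f q) / (r - q)) = max 0 (f r - f q) := by
    rw [mul_max_of_nonneg _ _ (le_of_lt hpos), mul_zero, mul_div_cancel₀ _ (ne_of_gt hpos)]
  linarith

lemma lemB (hf : ConvexOn ℝ I f) {p q x : ℝ} (hp : p ∈ I) (hq : q ∈ I) (hx : x ∈ I)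
    (hpq : p < q) (hqx : q ≤ x) (hsp : x - q ≤ q - p) :
    f q - max 0 (f p - f q) ≤ f x := by
  have h0 := lemB' hf hp hq hx hpq hqx
  have hpos : (0:ℝ) < q - p := by linarith
  have h1 : (x - q) * max 0 ((f p - f q) / (q - p)) ≤ (q - p) * max 0 ((f p - f q) / (q - p)) :=
    mul_le_mul_of_nonneg_right hsp (le_max_left _ _)
  have h2 : (q - p) * max 0 ((f p - f q) / (q - p)) = max 0 (f p - f q) := by
    rw [mul_max_of_nonneg _ _ (le_of_lt hpos), mul_zero, mul_div_cancel₀ _ (ne_of_gt hpos)]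
  linarith


/-- A convex function on a set squeezed between `Ioc a b` and `Icc a b` is bounded below. -/
lemma bddBelowAux {a b : ℝ} (hab : a < b) (hIb : I ⊆ Set.Icc a b)
    (hsub : Set.Ioc a b ⊆ I) (hf : ConvexOn ℝ I f) :
    ∃ B : ℝ, ∀ x ∈ I, B ≤ f x := by
  set c0 : ℝ := a + (b - a) / 4 with hc0
  set c1 : ℝ := a + (b - a) / 2 with hc1
  set c2 : ℝ := a + 3 * (b - a) / 4 with hc2
  have hc0I : c0 ∈ I := hsub ⟨by simp [hc0]; linarith, by simp [hc0]; linarith⟩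
  have hc1I : c1 ∈ I := hsub ⟨by simp [hc1]; linarith, by simp [hc1]; linarith⟩
  have hc2I : c2 ∈ I := hsub ⟨by simp [hc2]; linarith, by simp [hc2]; linarith⟩
  refine ⟨f c1 - (b - a) * (max 0 ((f c2 - f c1) / (c2 - c1)) +
      max 0 ((f c0 - f c1) / (c1 - c0))), fun x hx => ?_⟩
  obtain ⟨hax, hxb⟩ := hIb hx
  have hM1 : (0:ℝ) ≤ max 0 ((f c2 - f c1) / (c2 - c1)) := le_max_left _ _
  have hM2 : (0:ℝ) ≤ max 0 ((f c0 - f c1) / (c1 - c0)) := le_max_left _ _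
  rcases le_or_gt x c1 with h | h
  · have h0 := lemA' hf hx hc1I hc2I h (by simp [hc1, hc2]; linarith)
    have : (c1 - x) * max 0 ((f c2 - f c1) / (c2 - c1)) ≤
        (b - a) * max 0 ((f c2 - f c1) / (c2 - c1)) := by
      apply mul_le_mul_of_nonneg_right _ hM1
      simp [hc1]; linarith
    nlinarith [mul_nonneg (show (0:ℝ) ≤ b - a by linarith) hM2]
  · have h0 := lemB' hf hc0I hc1I hx (by simp [hc0, hc1]; linarith) (le_of_lt h)
    have : (x - c1) * max 0 ((f c0 - f c1) / (c1 - c0)) ≤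
        (b - a) * max 0 ((f c0 - f c1) / (c1 - c0)) := by
      apply mul_le_mul_of_nonneg_right _ hM2
      simp [hc1]; linarith
    nlinarith [mul_nonneg (show (0:ℝ) ≤ b - a by linarith) hM1]

/-- If `h` is bounded below on `(0, 2 t₀]`, then there are arbitrarily small `t`
with `h (2 t) - h t ≤ η`. -/
lemma exists_gap (h : ℝ → ℝ) (B t0 η : ℝ) (ht0 : 0 < t0) (hη : 0 < η)
    (hB : ∀ t : ℝ, 0 < t → t ≤ 2 * t0 → B ≤ h t) :
    ∃ t : ℝ, 0 < t ∧ t ≤ t0 ∧ h (2 * t) - h t ≤ η := by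
  by_contra hc
  push_neg at hc
  have key : ∀ k : ℕ, h (t0 / 2 ^ k) ≤ h (2 * t0) - (k + 1) * η := by
    intro k
    induction k with
    | zero =>
      have h1 := hc t0 ht0 le_rfl
      simpa using by linarith
    | succ k ih =>
      have hpos : (0:ℝ) < t0 / 2 ^ (k + 1) := by positivity
      have hle : t0 / 2 ^ (k + 1) ≤ t0 := by
        apply div_le_self (le_of_lt ht0)
        exact one_le_pow₀ (by norm_num)
      have h1 := hc _ hpos hle
      have h2 : 2 * (t0 / 2 ^ (k + 1)) = t0 / 2 ^ k := by
        rw [pow_succ]; field_simp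
      rw [h2] at h1
      push_cast
      push_cast at ih
      linarith
  obtain ⟨k, hk⟩ := exists_nat_gt ((h (2 * t0) - B) / η)
  have h2 := key k
  have h3 : B ≤ h (t0 / 2 ^ k) := by
    apply hB _ (by positivity)
    have : t0 / 2 ^ k ≤ t0 := by
      apply div_le_self (le_of_lt ht0)
      exact one_le_pow₀ (by norm_num)
    linarith
  rw [div_lt_iff₀ hη] at hk
  have : ((k:ℝ) + 1) * η ≥ (k:ℝ) * η := by nlinarith
  nlinarith


set_option maxHeartbeats 2000000 in
/-- Key quantitative lemma: closeness to a convex `g` at finitely many points controls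
the infimum of any convex `f`. -/
lemma key_quant {a b : ℝ} (hab : a < b) {I : Set ℝ} (hIb : I ⊆ Set.Icc a b)
    (hsub : Set.Ioc a b ⊆ I) {g : ℝ → ℝ} (hg : ConvexOn ℝ I g) {ε : ℝ} (hε : 0 < ε) :
    ∃ (S : Finset ℝ) (δ : ℝ), 0 < δ ∧ (↑S : Set ℝ) ⊆ I ∧
      ∀ f : ℝ → ℝ, ConvexOn ℝ I f → (∀ x ∈ S, |f x - g x| < δ) →
        |sInf (f '' I) - sInf (g '' I)| < ε := by
  have hbI : b ∈ I := hsub ⟨hab, le_rfl⟩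
  obtain ⟨B, hB⟩ := bddBelowAux hab hIb hsub hg
  have hgbdd : BddBelow (g '' I) := ⟨B, by rintro z ⟨x, hx, rfl⟩; exact hB x hx⟩
  have hgne : (g '' I).Nonempty := ⟨g b, ⟨b, hbI, rfl⟩⟩
  obtain ⟨z, hz, hzlt⟩ := exists_lt_of_csInf_lt hgne
    (lt_add_of_pos_right (sInf (g '' I)) (by positivity : (0:ℝ) < ε/4))
  obtain ⟨xs, hxsI, rfl⟩ := hz
  have h8 : (0:ℝ) < (b - a)/8 := by linarith
  obtain ⟨tL, htL0, htL8, gapL⟩ := exists_gap (fun t => g (a + t)) B ((b-a)/8) (ε/8) h8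
    (by positivity) (by
      intro t ht0 ht2
      exact hB _ (hsub ⟨by linarith, by linarith⟩))
  obtain ⟨tR, htR0, htR8, gapR⟩ := exists_gap (fun t => g (b - t)) B ((b-a)/8) (ε/8) h8
    (by positivity) (by
      intro t ht0 ht2
      exact hB _ (hsub ⟨by linarith, by linarith⟩))
  obtain ⟨KR, hKR⟩ : ∃ c : ℝ, c = (g b - g (b - tR)) / tR := ⟨_, rfl⟩
  obtain ⟨KL, hKL⟩ : ∃ c : ℝ, c = (g (a + 2*tL) - g (a + tL)) / tL := ⟨_, rfl⟩
  obtain ⟨K, hK⟩ : ∃ c : ℝ, c = max 0 KR + max 0 (-KL) + 1 := ⟨_, rfl⟩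
  have hKR' : KR ≤ K := by
    rw [hK]
    have := le_max_right (0:ℝ) KR
    have := le_max_left (0:ℝ) (-KL)
    linarith
  have hKL' : -KL ≤ K := by
    rw [hK]
    have := le_max_right (0:ℝ) (-KL)
    have := le_max_left (0:ℝ) KR
    linarith
  have hK0 : (0:ℝ) < K := by
    rw [hK]
    have := le_max_left (0:ℝ) KR
    have := le_max_left (0:ℝ) (-KL)
    linarith
  obtain ⟨L, hL⟩ : ∃ c : ℝ, c = (b - tR) - (a + tL) := ⟨_, rfl⟩
  have hL0 : (0:ℝ) < L := by rw [hL]; linarith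
  have hLba : L ≤ b - a := by rw [hL]; linarith
  obtain ⟨n, hn⟩ := exists_nat_gt (max (L * K * 8 / ε) 4)
  have hn4 : (4:ℝ) < n := lt_of_le_of_lt (le_max_right _ _) hn
  have hnK : L * K * 8 / ε < n := lt_of_le_of_lt (le_max_left _ _) hn
  have hn0 : (0:ℝ) < n := by linarith
  have hnnat : 2 ≤ n := by
    have h2 : (2:ℝ) ≤ n := by linarith
    exact_mod_cast h2
  obtain ⟨d, hd⟩ : ∃ c : ℝ, c = L / n := ⟨_, rfl⟩
  have hd0 : (0:ℝ) < d := by rw [hd]; positivity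
  have hnd : (n:ℝ) * d = L := by rw [hd]; field_simp
  have hdK : d * K ≤ ε/8 := by
    have h1 : L * K * 8 < n * ε := by
      rw [div_lt_iff₀ hε] at hnK; linarith
    rw [hd, div_mul_eq_mul_div, div_le_iff₀ hn0]
    linarith
  have hd4 : d ≤ (b - a)/4 := by
    have h1 : L / (n:ℝ) ≤ L / 4 :=
      div_le_div_of_nonneg_left (le_of_lt hL0) (by norm_num) (by linarith)
    rw [hd]; linarith
  obtain ⟨y, hy⟩ : ∃ y : ℕ → ℝ, y = fun j : ℕ => (a + tL) + j * d := ⟨_, rfl⟩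
  have hyj : ∀ j : ℕ, y j = (a + tL) + j * d := fun j => by rw [hy]
  have hyd : ∀ j : ℕ, y (j+1) = y j + d := by
    intro j; rw [hyj, hyj]; push_cast; ring
  have hy0 : y 0 = a + tL := by rw [hyj]; simp
  have hyn : y n = b - tR := by
    rw [hyj, hnd, hL]; ring
  have hymono : ∀ i j : ℕ, i ≤ j → y i ≤ y j := by
    intro i j hij
    rw [hyj, hyj]
    have : (i:ℝ) * d ≤ (j:ℝ) * d :=
      mul_le_mul_of_nonneg_right (by exact_mod_cast hij) (le_of_lt hd0)
    linarith
  have hymem : ∀ j : ℕ, j ≤ n → y j ∈ Set.Ioc a b := by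
    intro j hj
    constructor
    · have : (0:ℝ) ≤ (j:ℝ) * d := by positivity
      rw [hyj]; linarith
    · have := hymono j n hj
      rw [hyn] at this; linarith
  have hymemI : ∀ j : ℕ, j ≤ n → y j ∈ I := fun j hj => hsub (hymem j hj)
  have hl1I : a + tL ∈ I := hsub ⟨by linarith, by linarith⟩
  have hl2I : a + 2*tL ∈ I := hsub ⟨by linarith, by linarith⟩
  have hr1I : b - tR ∈ I := hsub ⟨by linarith, by linarith⟩
  have hr2I : b - 2*tR ∈ I := hsub ⟨by linarith, by linarith⟩
  refine ⟨(Finset.range (n+1)).image y ∪ {xs, a + tL, a + 2*tL, b - tR, b - 2*tR},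
    ε/100, by positivity, ?_, ?_⟩
  · intro x hx
    simp only [Finset.coe_union, Finset.coe_image, Finset.coe_range, Set.mem_union,
      Set.mem_image, Set.mem_Iio, Finset.coe_insert, Set.mem_insert_iff, Finset.coe_singleton,
      Set.mem_singleton_iff] at hx
    rcases hx with ⟨j, hj, rfl⟩ | h | h | h | h | h
    · exact hymemI j (by omega)
    all_goals subst h
    · exact hxsI
    · exact hl1I
    · exact hl2I
    · exact hr1I
    · exact hr2I
  intro f hf hfS
  have hcg : ∀ j : ℕ, j ≤ n → |f (y j) - g (y j)| < ε/100 := by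
    intro j hj
    exact hfS _ (Finset.mem_union_left _ (Finset.mem_image_of_mem y
      (Finset.mem_range.mpr (by omega))))
  have hcxs : |f xs - g xs| < ε/100 := hfS _ (Finset.mem_union_right _ (by simp))
  have hcl1 : |f (a + tL) - g (a + tL)| < ε/100 := hfS _ (Finset.mem_union_right _ (by simp))
  have hcl2 : |f (a + 2*tL) - g (a + 2*tL)| < ε/100 := hfS _ (Finset.mem_union_right _ (by simp))
  have hcr1 : |f (b - tR) - g (b - tR)| < ε/100 := hfS _ (Finset.mem_union_right _ (by simp))
  have hcr2 : |f (b - 2*tR) - g (b - 2*tR)| < ε/100 := hfS _ (Finset.mem_union_right _ (by simp))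
  -- the main lower bound on f over all of I
  have lower : ∀ x ∈ I, sInf (g '' I) - ε/2 ≤ f x := by
    intro x hx
    obtain ⟨hax, hxb⟩ := hIb hx
    have step : ∀ q r : ℝ, q ∈ I → |f q - g q| < ε/100 → |f r - g r| < ε/100 →
        g r - g q ≤ ε/8 → f q - max 0 (f r - f q) ≤ f x → sInf (g '' I) - ε/2 ≤ f x := by
      intro q r hqI hq hr hgr hle
      have h1 : sInf (g '' I) ≤ g q := csInf_le hgbdd ⟨q, hqI, rfl⟩
      rw [abs_lt] at hq hr
      have h2 : max 0 (f r - f q) ≤ ε/8 + 2*(ε/100) := by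
        apply max_le (by positivity)
        linarith
      linarith
    rcases le_or_gt x (a + tL) with hcase | hcase
    · -- left tail
      refine step (a + tL) (a + 2*tL) hl1I hcl1 hcl2 gapL ?_
      exact lemA hf hx hl1I hl2I hcase (by linarith) (by linarith)
    rcases le_or_gt (b - tR) x with hcase2 | hcase2
    · -- right tail
      refine step (b - tR) (b - 2*tR) hr1I hcr1 hcr2 gapR ?_
      exact lemB hf hr2I hr1I hx (by linarith) hcase2 (by linarith)
    -- middle
    obtain ⟨j, hjdef⟩ : ∃ j : ℕ, j = ⌊(x - (a + tL))/d⌋₊ := ⟨_, rfl⟩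
    have hnum0 : (0:ℝ) ≤ (x - (a + tL))/d := div_nonneg (by linarith) (le_of_lt hd0)
    have hj1 : (j:ℝ) * d ≤ x - (a + tL) := by
      have h := Nat.floor_le hnum0
      rw [← hjdef] at h
      rw [le_div_iff₀ hd0] at h
      exact h
    have hj2 : x - (a + tL) < ((j:ℝ) + 1) * d := by
      have h := Nat.lt_floor_add_one ((x - (a + tL))/d)
      rw [← hjdef] at h
      rw [div_lt_iff₀ hd0] at h
      push_cast at h ⊢
      linarith
    have hjn : j < n := by
      have hlt : (x - (a + tL))/d < n := by
        rw [div_lt_iff₀ hd0, hnd, hL]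
        linarith
      rw [hjdef]
      exact_mod_cast Nat.floor_lt hnum0 |>.mpr hlt
    have hyjx : y j ≤ x := by rw [hyj]; linarith
    have hxyj1 : x < y (j+1) := by rw [hyj]; push_cast; linarith
    rcases le_or_gt (j + 2) n with hj2n | hj2n
    · -- generic middle interval: use the two grid points to the right
      have hq1 : y (j+1) ∈ I := hymemI _ (by omega)
      have hq2 : y (j+2) ∈ I := hymemI _ (by omega)
      refine step (y (j+1)) (y (j+2)) hq1 (hcg _ (by omega)) (hcg _ hj2n) ?_ ?_
      · -- slope control via the right anchor
        have hs := slope4 hg hq1 hq2 hr1I hbI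
          (by rw [hyd (j+1)]; linarith)
          (by rw [← hyn]; exact hymono _ _ hj2n)
          (by linarith)
        have e1 : y (j+2) - y (j+1) = d := by rw [hyd (j+1)]; ring
        have e2 : b - (b - tR) = tR := by ring
        rw [e1, e2, ← hKR] at hs
        rw [div_le_iff₀ hd0] at hs
        have h3 : d * KR ≤ d * K := mul_le_mul_of_nonneg_left hKR' (le_of_lt hd0)
        linarith
      · refine lemA hf hx hq1 hq2 (le_of_lt hxyj1) (by rw [hyd (j+1)]; linarith) ?_
        have e1 := hyd (j+1)
        have e2 := hyd j
        linarith
    · -- last interval: use the two grid points to the left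
      obtain ⟨i, rfl⟩ : ∃ i, j = i + 1 := ⟨j - 1, by omega⟩
      have hin : i + 2 = n := by omega
      have hiI : y i ∈ I := hymemI _ (by omega)
      have hi1I : y (i+1) ∈ I := hymemI _ (by omega)
      have hyi2 : y (i+2) = b - tR := by rw [hin, hyn]
      have hdi := hyd i
      have hdi1 := hyd (i+1)
      refine step (y (i+1)) (y i) hi1I (hcg _ (by omega)) (hcg _ (by omega)) ?_ ?_
      · -- slope control via the left anchor
        have hyi : a + 2*tL ≤ y i := by
          have h1 : y i = b - tR - 2*d := by linarith
          rw [h1, hL] at *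
          linarith
        have hs := slope4 hg hl1I hl2I hiI hi1I
          (by linarith) hyi (by linarith)
        have e1 : a + 2*tL - (a + tL) = tL := by ring
        have e2 : y (i+1) - y i = d := by linarith
        rw [e1, e2, ← hKL] at hs
        rw [le_div_iff₀ hd0] at hs
        have h3 : d * (-KL) ≤ d * K := mul_le_mul_of_nonneg_left hKL' (le_of_lt hd0)
        linarith
      · -- x lies in [y (i+1), y (i+2)) = [y (i+1), b - tR)
        exact lemB hf hiI hi1I hx (by linarith) hyjx (by linarith)
  -- conclude
  have hfbdd : BddBelow (f '' I) :=
    ⟨sInf (g '' I) - ε/2, by rintro z ⟨x, hx, rfl⟩; exact lower x hx⟩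
  have hfne : (f '' I).Nonempty := ⟨f b, ⟨b, hbI, rfl⟩⟩
  have hlow : sInf (g '' I) - ε/2 ≤ sInf (f '' I) :=
    le_csInf hfne (by rintro z ⟨x, hx, rfl⟩; exact lower x hx)
  have hup : sInf (f '' I) ≤ f xs := csInf_le hfbdd ⟨xs, hxsI, rfl⟩
  rw [abs_lt] at hcxs ⊢
  constructor <;> linarith

/-- A pointwise-in-probability limit of convex random functions is convex. -/
lemma limit_convexOn {Ω : Type*} [MeasurableSpace Ω] (μ : Measure Ω) [IsProbabilityMeasure μ]
    {I : Set ℝ} (hconvI : Convex ℝ I) (f : ℕ → Ω → ℝ → ℝ) (g : ℝ → ℝ)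
    (hconv : ∀ m ω, ConvexOn ℝ I (f m ω))
    (hprob : ∀ x ∈ I, ∀ ε > (0:ℝ),
      Tendsto (fun m => μ {ω | ε ≤ |f m ω x - g x|}) atTop (nhds 0)) :
    ConvexOn ℝ I g := by
  refine ⟨hconvI, fun x hx y hy p q hp hq hpq => ?_⟩
  have hzI : p • x + q • y ∈ I := hconvI hx hy hp hq hpq
  simp only [smul_eq_mul] at *
  have key : ∀ ε > (0:ℝ), g (p * x + q * y) ≤ p * g x + q * g y + 2 * ε := by
    intro ε hε
    have h14 : (0:ENNReal) < 1/4 := by norm_num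
    have Ex := (hprob x hx ε hε).eventually (gt_mem_nhds h14)
    have Ey := (hprob y hy ε hε).eventually (gt_mem_nhds h14)
    have Ez := (hprob _ hzI ε hε).eventually (gt_mem_nhds h14)
    obtain ⟨m, hmx, hmy, hmz⟩ := (Ex.and (Ey.and Ez)).exists
    set A := {ω | ε ≤ |f m ω x - g x|} with hA
    set Bs := {ω | ε ≤ |f m ω y - g y|} with hBs
    set C := {ω | ε ≤ |f m ω (p * x + q * y) - g (p * x + q * y)|} with hC
    have hU : μ (A ∪ Bs ∪ C) < 1 := by
      calc μ (A ∪ Bs ∪ C) ≤ μ (A ∪ Bs) + μ C := measure_union_le _ _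
        _ ≤ μ A + μ Bs + μ C := by gcongr; exact measure_union_le _ _
        _ < 1/4 + 1/4 + 1/4 := by
            exact ENNReal.add_lt_add (ENNReal.add_lt_add hmx hmy) hmz
        _ < 1 := by
            have h1 : (1:ENNReal)/4 + 1/4 + 1/4 = 3/4 := by
              rw [ENNReal.div_add_div_same, ENNReal.div_add_div_same]
              norm_num
            rw [h1, ENNReal.div_lt_iff (by norm_num) (by norm_num)]
            norm_num
    have hne : ((A ∪ Bs ∪ C)ᶜ).Nonempty := by
      by_contra h
      rw [Set.not_nonempty_iff_eq_empty, Set.compl_empty_iff] at h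
      rw [h, measure_univ] at hU
      exact lt_irrefl _ hU
    obtain ⟨ω, hω⟩ := hne
    simp only [Set.mem_compl_iff, Set.mem_union, hA, hBs, hC, Set.mem_setOf_eq, not_or,
      not_le] at hω
    obtain ⟨⟨hωx, hωy⟩, hωz⟩ := hω
    rw [abs_lt] at hωx hωy hωz
    have hcv := (hconv m ω).2 hx hy hp hq hpq
    simp only [smul_eq_mul] at hcv
    nlinarith [mul_le_mul_of_nonneg_left (le_of_lt hωx.2) hp,
      mul_le_mul_of_nonneg_left (le_of_lt hωy.2) hq,
      mul_nonneg hp (le_of_lt hε), mul_nonneg hq (le_of_lt hε)]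
  by_contra hlt
  push_neg at hlt
  have := key ((g (p * x + q * y) - (p * g x + q * g y)) / 4) (by linarith)
  linarith

/-- Main auxiliary lemma, for any interval squeezed between `Ioc a b` and `Icc a b`. -/
lemma main_aux {Ω : Type*} [MeasurableSpace Ω] (μ : Measure Ω) [IsProbabilityMeasure μ]
    {a b : ℝ} (hab : a < b) {I : Set ℝ} (hIb : I ⊆ Set.Icc a b) (hsub : Set.Ioc a b ⊆ I)
    (hconvI : Convex ℝ I) (f : ℕ → Ω → ℝ → ℝ) (g : ℝ → ℝ)
    (hconv : ∀ m ω, ConvexOn ℝ I (f m ω))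
    (hprob : ∀ x ∈ I, ∀ ε > (0:ℝ),
      Tendsto (fun m => μ {ω | ε ≤ |f m ω x - g x|}) atTop (nhds 0)) :
    ∀ ε > (0:ℝ),
      Tendsto (fun m => μ {ω | ε ≤ |sInf (f m ω '' I) - sInf (g '' I)|}) atTop (nhds 0) := by
  intro ε hε
  have hg := limit_convexOn μ hconvI f g hconv hprob
  obtain ⟨S, δ, hδ, hSI, hkey⟩ := key_quant hab hIb hsub hg hε
  have hsum : Tendsto (fun m => ∑ x ∈ S, μ {ω | δ ≤ |f m ω x - g x|}) atTop (nhds 0) := by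
    have h := tendsto_finset_sum S (fun x hx => hprob x (hSI hx) δ hδ)
    simpa using h
  refine tendsto_of_tendsto_of_tendsto_of_le_of_le tendsto_const_nhds hsum
    (fun m => zero_le) (fun m => ?_)
  calc μ {ω | ε ≤ |sInf (f m ω '' I) - sInf (g '' I)|}
      ≤ μ (⋃ x ∈ S, {ω | δ ≤ |f m ω x - g x|}) := by
        apply measure_mono
        intro ω hω
        simp only [Set.mem_setOf_eq] at hω
        by_contra hn
        simp only [Set.mem_iUnion, Set.mem_setOf_eq, not_exists, not_le] at hn
        have := hkey (f m ω) (hconv m ω) (fun x hx => hn x hx)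
        exact absurd hω (not_le.mpr this)
    _ ≤ ∑ x ∈ S, μ {ω | δ ≤ |f m ω x - g x|} := measure_biUnion_finset_le S _

end InfConvAux

/-- Lemma 10 extension, convergence of infima of random convex functions.
Fix `b > a`.  If `f_m : [a,b] → ℝ` is a sequence of random convex functions converging pointwise
in probability to `f : [a,b] → ℝ`, then `inf_{x ∈ [a,b]} f_m(x)` converges in probability to
`inf_{x ∈ [a,b]} f(x)`; similarly with the half-open interval `(a, b]` in place of `[a, b]`. -/
theorem inf_of_random_convex_functions_converges
    {Ω : Type*} [MeasurableSpace Ω] (μ : Measure Ω) [IsProbabilityMeasure μ]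
    (a b : ℝ) (hab : a < b) :
    (∀ (f : ℕ → Ω → ℝ → ℝ) (g : ℝ → ℝ),
      (∀ m x, Measurable fun ω => f m ω x) →
      (∀ m ω, ConvexOn ℝ (Set.Icc a b) (f m ω)) →
      (∀ x ∈ Set.Icc a b, ∀ ε > (0 : ℝ),
        Tendsto (fun m => μ {ω | ε ≤ |f m ω x - g x|}) atTop (nhds 0)) →
      ∀ ε > (0 : ℝ),
        Tendsto (fun m =>
            μ {ω | ε ≤ |sInf (f m ω '' Set.Icc a b) - sInf (g '' Set.Icc a b)|})
          atTop (nhds 0)) ∧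
    (∀ (f : ℕ → Ω → ℝ → ℝ) (g : ℝ → ℝ),
      (∀ m x, Measurable fun ω => f m ω x) →
      (∀ m ω, ConvexOn ℝ (Set.Ioc a b) (f m ω)) →
      (∀ x ∈ Set.Ioc a b, ∀ ε > (0 : ℝ),
        Tendsto (fun m => μ {ω | ε ≤ |f m ω x - g x|}) atTop (nhds 0)) →
      ∀ ε > (0 : ℝ),
        Tendsto (fun m =>
            μ {ω | ε ≤ |sInf (f m ω '' Set.Ioc a b) - sInf (g '' Set.Ioc a b)|})
          atTop (nhds 0)) := by
  constructor
  · intro f g _ hconv hprob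
    exact InfConvAux.main_aux μ hab (le_refl _) Set.Ioc_subset_Icc_self (convex_Icc a b)
      f g hconv hprob
  · intro f g _ hconv hprob
    exact InfConvAux.main_aux μ hab Set.Ioc_subset_Icc_self (le_refl _) (convex_Ioc a b)
      f g hconv hprob

end
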